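/- Let H and M be disjoint finite sets with vote counts κ ≥ 0 and reputation scores p ∈ [0,1], separated by a threshold t ∈ [0,1] (p_x > t for x ∈ H, p_y ≤ t for y ∈ M), with Σ_{x∈H} κ_x = 2·Σ_{y∈M} κ_y. Set 𝒱^H = Σ_{x∈H} p_x·κ_x, 𝒱^M = Σ_{y∈M} p_y·κ_y, 𝓛^H = Σ_{x∈H} κ_x − 𝒱^H, 𝓛^M = Σ_{y∈M} κ_y − 𝒱^M, and Δ𝓛 = 2·𝓛^M − 𝓛^H. If 𝒱^M > 0, then 𝒱^H/𝒱^M = 2 + Δ𝓛/𝒱^M with Δ𝓛/𝒱^M ≥ 0; in particular 𝒱^H/𝒱^M ≥ 2, i.e. the ratio of honest to malicious effective validator votes increases above the originally assumed factor of 2 by the relative loss difference L̂ = Δ𝓛/𝒱^M. (Lemma 2.) -/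

import Mathlib

/-- Lemma 2: if the malicious effective votes `𝒱ᴹ` are positive, the ratio of
honest to malicious effective votes equals `2 + Δ𝓛/𝒱ᴹ` with `Δ𝓛/𝒱ᴹ ≥ 0`;
in particular the ratio is at least the originally assumed factor of `2`. -/
theorem lemma2_honest_malicious_vote_ratio
    {α : Type*} [DecidableEq α] (H M : Finset α) (hdisj : Disjoint H M)
    (κ p : α → ℝ)
    (hκ : ∀ x ∈ H ∪ M, 0 ≤ κ x)
    (hp0 : ∀ x ∈ H ∪ M, 0 ≤ p x) (hp1 : ∀ x ∈ H ∪ M, p x ≤ 1)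
    (t : ℝ) (ht0 : 0 ≤ t) (ht1 : t ≤ 1)
    (hH : ∀ x ∈ H, t < p x) (hM : ∀ y ∈ M, p y ≤ t)
    (hvotes : ∑ x ∈ H, κ x = 2 * ∑ y ∈ M, κ y)
    (hVM : 0 < ∑ y ∈ M, p y * κ y) :
    (∑ x ∈ H, p x * κ x) / (∑ y ∈ M, p y * κ y) =
        2 + (2 * ((∑ y ∈ M, κ y) - ∑ y ∈ M, p y * κ y) -
              ((∑ x ∈ H, κ x) - ∑ x ∈ H, p x * κ x)) /
            (∑ y ∈ M, p y * κ y) ∧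
      0 ≤ (2 * ((∑ y ∈ M, κ y) - ∑ y ∈ M, p y * κ y) -
            ((∑ x ∈ H, κ x) - ∑ x ∈ H, p x * κ x)) /
          (∑ y ∈ M, p y * κ y) ∧
      2 ≤ (∑ x ∈ H, p x * κ x) / (∑ y ∈ M, p y * κ y) := by
  set VH := ∑ x ∈ H, p x * κ x with hVH
  set VM := ∑ y ∈ M, p y * κ y with hVMdef
  have hkey : VH ≥ 2 * VM := by
    have h1 : t * ∑ x ∈ H, κ x ≤ VH := by
      rw [Finset.mul_sum]
      apply Finset.sum_le_sum
      intro x hx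
      exact mul_le_mul_of_nonneg_right (le_of_lt (hH x hx))
        (hκ x (Finset.mem_union_left M hx))
    have h2 : VM ≤ t * ∑ y ∈ M, κ y := by
      rw [Finset.mul_sum]
      apply Finset.sum_le_sum
      intro y hy
      exact mul_le_mul_of_nonneg_right (hM y hy)
        (hκ y (Finset.mem_union_right H hy))
    calc 2 * VM ≤ 2 * (t * ∑ y ∈ M, κ y) := by linarith
    _ = t * ∑ x ∈ H, κ x := by rw [hvotes]; ring
    _ ≤ VH := h1
  have hΔ : 2 * ((∑ y ∈ M, κ y) - VM) - ((∑ x ∈ H, κ x) - VH) = VH - 2 * VM := by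
    rw [hvotes]; ring
  have hne := ne_of_gt hVM
  refine ⟨?_, ?_, ?_⟩
  · rw [hΔ]; field_simp; ring
  · rw [hΔ]; exact div_nonneg (by linarith) (le_of_lt hVM)
  · rw [ge_iff_le, ← sub_nonneg] at hkey
    rw [le_div_iff₀ hVM]; linarith
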